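/- For any finite poset P and positive integer m, the number of lattice points in the m-th dilate of the chain polytope C(P) equals the number of order-preserving maps from P to {1,2,...,m+1}. -/

import Mathlib

noncomputable section
namespace ChainPolyAux
open Finset

variable {α : Type*} [Fintype α] [PartialOrder α]

open Classical in
def chainsTo (i : α) : Finset (Finset α) :=
  univ.filter (fun s => i ∈ s ∧ IsChain (· ≤ ·) (s : Set α) ∧ ∀ j ∈ s, j ≤ i)

lemma mem_chainsTo {i : α} {s : Finset α} :
    s ∈ chainsTo i ↔ i ∈ s ∧ IsChain (· ≤ ·) (s : Set α) ∧ ∀ j ∈ s, j ≤ i := by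
  classical simp [chainsTo]

lemma chainsTo_nonempty (i : α) : (chainsTo i).Nonempty :=
  ⟨{i}, mem_chainsTo.2 ⟨mem_singleton_self i, by
    simpa using Set.subsingleton_singleton.isChain (r := (· ≤ ·)), by simp⟩⟩

def F (y : α → ℤ) (i : α) : ℤ :=
  (chainsTo i).sup' (chainsTo_nonempty i) (fun s => ∑ j ∈ s, y j)

def G (y : α → ℤ) (i : α) : ℕ := (F y i).toNat

open Classical in
def pred (i : α) : Finset α := univ.filter (· < i)

lemma mem_pred {i j : α} : j ∈ pred i ↔ j < i := by classical simp [pred]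

def L (f : α → ℕ) (i : α) : ℕ := (pred i).sup f

/-- every nonempty finite chain has a top element -/
lemma exists_top {s : Finset α} (hs : IsChain (· ≤ ·) (s : Set α)) (hne : s.Nonempty) :
    ∃ j ∈ s, ∀ k ∈ s, k ≤ j := by
  obtain ⟨j, hj, hmax⟩ := s.exists_maximal hne
  refine ⟨j, hj, fun k hk => ?_⟩
  rcases eq_or_ne k j with rfl | hne'
  · exact le_rfl
  · rcases hs hk hj hne' with h | h
    · exact h
    · exact hmax hk h

lemma singleton_mem_chainsTo (i : α) : ({i} : Finset α) ∈ chainsTo i :=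
  mem_chainsTo.2 ⟨mem_singleton_self i, by
    simpa using Set.subsingleton_singleton.isChain (r := (· ≤ ·)), by simp⟩

lemma self_le_F (y : α → ℤ) (i : α) : y i ≤ F y i := by
  have := le_sup' (fun s => ∑ j ∈ s, y j) (singleton_mem_chainsTo i)
  simpa [F, -le_sup'_iff] using this

lemma chain_sum_le_F (y : α → ℤ) {s : Finset α} {j : α} (h : s ∈ chainsTo j) :
    ∑ k ∈ s, y k ≤ F y j :=
  le_sup' (fun s => ∑ k ∈ s, y k) h

lemma F_le_of_chains (y : α → ℤ) (m : ℤ)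
    (hc : ∀ s : Finset α, IsChain (· ≤ ·) (s : Set α) → ∑ i ∈ s, y i ≤ m) (i : α) :
    F y i ≤ m := by
  refine sup'_le _ _ fun s hs => hc s (mem_chainsTo.1 hs).2.1

lemma F_mono (y : α → ℤ) (hy : ∀ i, 0 ≤ y i) {i i' : α} (h : i ≤ i') :
    F y i ≤ F y i' := by
  classical
  refine sup'_le _ _ fun s hs => ?_
  obtain ⟨his, hchain, hle⟩ := mem_chainsTo.1 hs
  rcases eq_or_lt_of_le h with rfl | hlt
  · exact chain_sum_le_F y hs
  · have hi' : i' ∉ s := fun hmem => absurd (hle _ hmem) hlt.not_ge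
    have hins : insert i' s ∈ chainsTo i' := by
      refine mem_chainsTo.2 ⟨mem_insert_self _ _, ?_, ?_⟩
      · rw [coe_insert]
        exact hchain.insert (fun b hb _ => Or.inr ((hle b hb).trans hlt.le))
      · intro j hj
        rcases mem_insert.1 hj with rfl | hj
        · exact le_rfl
        · exact (hle j hj).trans hlt.le
    calc ∑ k ∈ s, y k ≤ y i' + ∑ k ∈ s, y k := le_add_of_nonneg_left (hy i')
      _ = ∑ k ∈ insert i' s, y k := (sum_insert hi').symm
      _ ≤ F y i' := chain_sum_le_F y hins

/-- the key recurrence: `F y i = y i + max over strict predecessors of `G y`. -/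
lemma F_eq (y : α → ℤ) (i : α) : F y i = y i + (L (G y) i : ℤ) := by
  classical
  refine le_antisymm (sup'_le _ _ fun s hs => ?_) ?_
  · obtain ⟨his, hchain, hle⟩ := mem_chainsTo.1 hs
    rw [← add_sum_erase _ _ his]
    refine add_le_add_right ?_ _
    rcases (s.erase i).eq_empty_or_nonempty with he | hne
    · simp [he]
    · have hchain' : IsChain (· ≤ ·) ((s.erase i : Finset α) : Set α) :=
        hchain.mono (Finset.coe_subset.2 (s.erase_subset i))
      obtain ⟨j, hj, hjtop⟩ := exists_top hchain' hne
      have hji : j < i :=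
        lt_of_le_of_ne (hle j (mem_of_mem_erase hj)) (ne_of_mem_erase hj)
      have hmem : s.erase i ∈ chainsTo j := mem_chainsTo.2 ⟨hj, hchain', hjtop⟩
      calc ∑ k ∈ s.erase i, y k ≤ F y j := chain_sum_le_F y hmem
        _ ≤ (G y j : ℤ) := Int.self_le_toNat _
        _ ≤ (L (G y) i : ℤ) := by
            exact_mod_cast Finset.le_sup (mem_pred.2 hji)
  · rcases (pred i).eq_empty_or_nonempty with he | hne
    · have : L (G y) i = 0 := by simp [L, he]
      rw [this]
      simpa using self_le_F y i
    · obtain ⟨j, hj, hLj⟩ := Finset.exists_mem_eq_sup (pred i) hne (G y)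
      rw [L, hLj]
      rcases le_or_gt 0 (F y j) with hpos | hneg
      · have hGj : (G y j : ℤ) = F y j := Int.toNat_of_nonneg hpos
        rw [hGj]
        obtain ⟨s, hs, hFs⟩ := Finset.exists_mem_eq_sup' (chainsTo_nonempty j)
          (fun s => ∑ k ∈ s, y k)
        obtain ⟨hjs, hchain, hle⟩ := mem_chainsTo.1 hs
        have hji : j < i := mem_pred.1 hj
        have hi : i ∉ s := fun hmem => absurd (hle _ hmem) hji.not_ge
        have hins : insert i s ∈ chainsTo i := by
          refine mem_chainsTo.2 ⟨mem_insert_self _ _, ?_, ?_⟩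
          · rw [coe_insert]
            exact hchain.insert (fun b hb _ => Or.inr ((hle b hb).trans hji.le))
          · intro k hk
            rcases mem_insert.1 hk with rfl | hk
            · exact le_rfl
            · exact (hle k hk).trans hji.le
        have hFs' : F y j = ∑ k ∈ s, y k := hFs
        calc y i + F y j = ∑ k ∈ insert i s, y k := by rw [sum_insert hi, hFs']
          _ ≤ F y i := chain_sum_le_F y hins
      · have hGj : (G y j : ℤ) = 0 := by
          simp [G, Int.toNat_of_nonpos hneg.le]
        rw [hGj, add_zero]
        exact self_le_F y i

def yOf (f : α → ℕ) (i : α) : ℤ := (f i : ℤ) - (L f i : ℤ)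

lemma F_yOf (f : α → ℕ) (i : α) : F (yOf f) i = (f i : ℤ) := by
  induction i using WellFoundedLT.induction with
  | ind i IH =>
    rw [F_eq]
    have hL : L (G (yOf f)) i = L f i := by
      refine Finset.sup_congr rfl fun j hj => ?_
      have := IH j (mem_pred.1 hj)
      simp [G, this]
    rw [hL, yOf]
    ring

end ChainPolyAux

open ChainPolyAux in
/-- For a finite poset `P` and positive integer `m`, the number of lattice points in the
`m`-th dilate of the chain polytope `C(P)` (integer vectors `y` with `y i ≥ 0` and
`∑_{i ∈ s} y i ≤ m` for every chain `s` of `P`) equals the number of order-preserving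
maps from `P` to `{1,...,m+1}`. -/
theorem chainPolytope_dilate_latticePoints_card
    (α : Type*) [Fintype α] [PartialOrder α] (m : ℕ) (hm : 0 < m) :
    Nat.card {y : α → ℤ // (∀ i, 0 ≤ y i) ∧
        ∀ s : Finset α, IsChain (· ≤ ·) (s : Set α) → ∑ i ∈ s, y i ≤ (m : ℤ)} =
      Nat.card {η : α → Fin (m + 1) // ∀ x y : α, x ≤ y → η x ≤ η y} := by
  refine Nat.card_congr ?_
  refine
    { toFun := fun y => ⟨fun i => ⟨G y.1 i, ?_⟩, ?_⟩
      invFun := fun f => ⟨yOf (fun j => (f.1 j : ℕ)), ?_, ?_⟩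
      left_inv := ?_
      right_inv := ?_ }
  · -- G y i < m + 1
    have : F y.1 i ≤ (m : ℤ) := F_le_of_chains y.1 m y.2.2 i
    have : G y.1 i ≤ m := Int.toNat_le.2 this
    omega
  · -- monotone
    intro a b hab
    have := F_mono y.1 y.2.1 hab
    exact Int.toNat_le_toNat this
  · -- nonneg of yOf
    intro i
    have : L (fun j => ((f.1 j : ℕ))) i ≤ (f.1 i : ℕ) := by
      refine Finset.sup_le fun j hj => ?_
      exact f.2 j i (mem_pred.1 hj).le
    simp only [yOf, sub_nonneg]
    exact_mod_cast this
  · -- chain sums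
    intro s hs
    rcases s.eq_empty_or_nonempty with rfl | hne
    · simp
    · obtain ⟨j, hj, hjtop⟩ := exists_top hs hne
      have hmem : s ∈ chainsTo j := mem_chainsTo.2 ⟨hj, hs, hjtop⟩
      calc ∑ k ∈ s, yOf (fun j => ((f.1 j : ℕ))) k ≤ F (yOf fun j => ((f.1 j : ℕ))) j :=
            chain_sum_le_F _ hmem
        _ = ((f.1 j : ℕ) : ℤ) := F_yOf _ j
        _ ≤ (m : ℤ) := by exact_mod_cast Nat.lt_succ_iff.1 (f.1 j).2
  · -- left inverse
    rintro ⟨y, hy, hc⟩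
    ext i
    show yOf (fun j => G y j) i = y i
    have h1 : ((G y i : ℕ) : ℤ) = F y i :=
      Int.toNat_of_nonneg ((hy i).trans (self_le_F y i))
    have h2 : F y i = y i + (L (G y) i : ℤ) := F_eq y i
    show (G y i : ℤ) - (L (G y) i : ℤ) = y i
    rw [h1, h2]; ring
  · -- right inverse
    rintro ⟨f, hf⟩
    ext i
    show G (yOf fun j => ((f j : ℕ))) i = ((f i : ℕ))
    rw [G, F_yOf]
    simp
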